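/- arXiv:2605.06459 — 2 statements merged into one kernel-verified Lean document; each statement's English description precedes it below -/
import Mathlib

section
/- There exists a constant C > 0 such that for all 0 < x < 1 and all real s, |Log((1-x)/(1 - x e^{is})) - isx/(1-x) + s²x/(2(1-x)²)| ≤ C x |s|³ / (1-x)³, where Log denotes the principal branch of the complex logarithm. -/
open Complex

lemma aux_abs_sI (s : ℝ) : ‖((s:ℂ) * I)‖ = |s| := by simp

lemma aux_exp1 (s : ℝ) : ‖Complex.exp ((s:ℂ) * I) - 1‖ ≤ 2 * |s| := by
  rcases le_or_gt |s| 1 with h | h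
  · have hb := Complex.exp_bound (x := (s:ℂ) * I) (by rw [aux_abs_sI]; exact h) (n := 1) one_pos
    rw [aux_abs_sI] at hb
    simp only [Finset.sum_range_one, pow_zero, Nat.factorial_zero, Nat.cast_one, div_one,
      pow_one] at hb
    calc ‖Complex.exp ((s:ℂ)*I) - 1‖
        ≤ |s| * ((Nat.succ 1 : ℝ) * ((Nat.factorial 1 : ℝ) * 1)⁻¹) := hb
      _ ≤ 2 * |s| := by norm_num [Nat.factorial]; nlinarith [abs_nonneg s]
  · have h2 : ‖Complex.exp ((s:ℂ) * I) - 1‖ ≤ ‖Complex.exp ((s:ℂ)*I)‖ + 1 := by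
      simpa using norm_sub_le (Complex.exp ((s:ℂ)*I)) 1
    have he : ‖Complex.exp ((s:ℂ)*I)‖ = 1 := by
      simpa using Complex.norm_exp_ofReal_mul_I s
    nlinarith [abs_nonneg s]

lemma aux_exp2 (s : ℝ) : ‖Complex.exp ((s:ℂ) * I) - 1 - (s:ℂ) * I‖ ≤ 3 * s ^ 2 := by
  rcases le_or_gt |s| 1 with h | h
  · have hb := Complex.exp_bound (x := (s:ℂ) * I) (by rw [aux_abs_sI]; exact h) (n := 2)
      (by norm_num)
    rw [aux_abs_sI] at hb
    have hsum : ∑ m ∈ Finset.range 2, ((s:ℂ)*I) ^ m / m.factorial = 1 + (s:ℂ)*I := by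
      simp [Finset.sum_range_succ]
    rw [hsum] at hb
    have : Complex.exp ((s:ℂ)*I) - 1 - (s:ℂ)*I = Complex.exp ((s:ℂ)*I) - (1 + (s:ℂ)*I) := by ring
    rw [this]
    calc ‖_‖ ≤ |s| ^ 2 * ((Nat.succ 2 : ℝ) * ((Nat.factorial 2 : ℝ) * 2)⁻¹) := hb
      _ ≤ 3 * s ^ 2 := by norm_num [Nat.factorial]; nlinarith [sq_nonneg s, _root_.sq_abs s]
  · have h2 : ‖Complex.exp ((s:ℂ) * I) - 1 - (s:ℂ)*I‖ ≤ ‖Complex.exp ((s:ℂ)*I)‖ + 1 + |s| := by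
      calc ‖Complex.exp ((s:ℂ) * I) - 1 - (s:ℂ)*I‖ ≤ ‖Complex.exp ((s:ℂ)*I) - 1‖ + ‖(s:ℂ)*I‖ :=
            norm_sub_le _ _
        _ ≤ ‖Complex.exp ((s:ℂ)*I)‖ + 1 + |s| := by
            have := norm_sub_le (Complex.exp ((s:ℂ)*I)) 1
            have : ‖(s:ℂ)*I‖ = |s| := by simpa using aux_abs_sI s
            simp only [this]
            gcongr
            simpa using norm_sub_le (Complex.exp ((s:ℂ)*I)) 1
    have he : ‖Complex.exp ((s:ℂ)*I)‖ = 1 := by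
      simpa using Complex.norm_exp_ofReal_mul_I s
    nlinarith [abs_nonneg s, _root_.sq_abs s]

lemma aux_exp3 (s : ℝ) :
    ‖Complex.exp ((s:ℂ) * I) - 1 - (s:ℂ) * I + (s:ℂ) ^ 2 / 2‖ ≤ 4 * |s| ^ 3 := by
  rcases le_or_gt |s| 1 with h | h
  · have hb := Complex.exp_bound (x := (s:ℂ) * I) (by rw [aux_abs_sI]; exact h) (n := 3)
      (by norm_num)
    rw [aux_abs_sI] at hb
    have hsum : ∑ m ∈ Finset.range 3, ((s:ℂ)*I) ^ m / m.factorial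
        = 1 + (s:ℂ)*I - (s:ℂ)^2/2 := by
      simp [Finset.sum_range_succ]
      ring_nf
      simp [Complex.I_sq]
      ring
    rw [hsum] at hb
    have heq : Complex.exp ((s:ℂ)*I) - 1 - (s:ℂ)*I + (s:ℂ)^2/2
        = Complex.exp ((s:ℂ)*I) - (1 + (s:ℂ)*I - (s:ℂ)^2/2) := by ring
    rw [heq]
    calc ‖_‖ ≤ |s| ^ 3 * ((Nat.succ 3 : ℝ) * ((Nat.factorial 3 : ℝ) * 3)⁻¹) := hb
      _ ≤ 4 * |s| ^ 3 := by norm_num [Nat.factorial]; nlinarith [pow_nonneg (abs_nonneg s) 3]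
  · have hs2 : ‖(s:ℂ)^2/2‖ = s^2/2 := by
      rw [norm_div]
      simp [← Complex.ofReal_pow,
        _root_.abs_of_nonneg (sq_nonneg s)]
    have h2 : ‖Complex.exp ((s:ℂ) * I) - 1 - (s:ℂ)*I + (s:ℂ)^2/2‖
        ≤ 1 + 1 + |s| + s^2/2 := by
      have he : ‖Complex.exp ((s:ℂ)*I)‖ = 1 := by
        simpa using Complex.norm_exp_ofReal_mul_I s
      have hsI : ‖(s:ℂ)*I‖ = |s| := by simpa using aux_abs_sI s
      calc ‖Complex.exp ((s:ℂ) * I) - 1 - (s:ℂ)*I + (s:ℂ)^2/2‖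
          ≤ ‖Complex.exp ((s:ℂ) * I) - 1 - (s:ℂ)*I‖ + ‖(s:ℂ)^2/2‖ := norm_add_le _ _
        _ ≤ (‖Complex.exp ((s:ℂ) * I) - 1‖ + ‖(s:ℂ)*I‖) + ‖(s:ℂ)^2/2‖ := by
            gcongr; exact norm_sub_le _ _
        _ ≤ ((‖Complex.exp ((s:ℂ) * I)‖ + ‖(1:ℂ)‖) + ‖(s:ℂ)*I‖) + ‖(s:ℂ)^2/2‖ := by
            gcongr; exact norm_sub_le _ _
        _ = 1 + 1 + |s| + s^2/2 := by rw [he, hsI, hs2, norm_one]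
    nlinarith [abs_nonneg s, _root_.sq_abs s]

lemma aux_stepA (W : ℂ) (hW : (1:ℂ) - W ≠ 0) :
    W/(1-W) - (W/(1-W))^2/2 = W + W^2/2 - W^4/(2*(1-W)^2) := by
  field_simp
  ring

lemma aux_stepC (v e S : ℂ) :
    v*e + (v*e)^2/2 - (I*S*v - S^2*(v+v^2)/2)
      = v*(e - S*I + S^2/2) + v^2/2*((e - S*I)*(e + S*I)) := by
  linear_combination (v^2*S^2/2) * Complex.I_sq

lemma aux_u4 (u : ℝ) (hu0 : 0 ≤ u) (hu : u ≤ 1/4) :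
    (2*u)^4/(2*((1:ℝ)/2)^2) ≤ 8*u^3 := by
  have h : (2*u)^4/(2*((1:ℝ)/2)^2) = 32*u^4 := by ring
  rw [h]
  nlinarith [pow_nonneg hu0 3, mul_nonneg (sub_nonneg.mpr hu) (pow_nonneg hu0 3)]

lemma aux_small (x b : ℝ) (hx0 : 0 < x) (hx1 : x < 1) (hb : 0 ≤ b) :
    6*(x*b/(1-x))^3 + (8*(x*b/(1-x))^3 + (4*(x/(1-x))*b^3 + (9/2)*(x/(1-x))^2*b^3))
      ≤ 400*x*b^3/(1-x)^3 := by
  have h1x : (0:ℝ) < 1 - x := by linarith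
  have hx3 : x^3 ≤ x := by nlinarith [sq_nonneg x, mul_pos hx0 hx0]
  have hx2 : x^2 ≤ x := by nlinarith
  have hd3 : (1-x)^3 ≤ 1-x := by
    have h2x : (0:ℝ) ≤ 2 - x := by linarith
    nlinarith [mul_nonneg (mul_nonneg h1x.le hx0.le) h2x]
  have hd32 : (1-x)^3 ≤ (1-x)^2 := by nlinarith [mul_nonneg (sq_nonneg (1-x)) hx0.le]
  have h1 : (x*b/(1-x))^3 ≤ x*b^3/(1-x)^3 := by
    rw [div_pow, mul_pow]
    apply div_le_div₀ (by positivity) ?_ (by positivity) (le_refl _)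
    nlinarith [mul_nonneg (sub_nonneg.mpr hx3) (pow_nonneg hb 3)]
  have h2 : (x/(1-x))*b^3 ≤ x*b^3/(1-x)^3 := by
    rw [div_mul_eq_mul_div]
    exact div_le_div₀ (by positivity) (le_refl _) (by positivity) hd3
  have h3 : (x/(1-x))^2*b^3 ≤ x*b^3/(1-x)^3 := by
    rw [div_pow, div_mul_eq_mul_div]
    apply div_le_div₀ (by positivity) ?_ (by positivity) hd32
    nlinarith [mul_nonneg (sub_nonneg.mpr hx2) (pow_nonneg hb 3)]
  have hR : 400*x*b^3/(1-x)^3 = 400*(x*b^3/(1-x)^3) := by ring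
  have hR0 : 0 ≤ x*b^3/(1-x)^3 := by positivity
  rw [hR]
  linarith

lemma aux_large (x b : ℝ) (hx0 : 0 < x) (hx1 : x < 1) (hb : 0 ≤ b)
    (hkey : 1 - x < 4*(x*b)) :
    (2*(x*b/(1-x)) + Real.pi) + x*b/(1-x) + b^2*x/(2*(1-x)^2) ≤ 400*x*b^3/(1-x)^3 := by
  have h1x : (0:ℝ) < 1 - x := by linarith
  have hx3 : x^3 ≤ x := by nlinarith [sq_nonneg x, mul_pos hx0 hx0]
  have hx2 : x^2 ≤ x := by nlinarith
  have hsq : (1-x)^2 ≤ 16*x^2*b^2 := by nlinarith [mul_nonneg hx0.le hb]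
  have hq1 : 3*(x*b/(1-x)) ≤ 48*(x*b^3/(1-x)^3) := by
    have e1 : 3*(x*b/(1-x)) = (3*(x*b))/(1-x) := by ring
    have e2 : 48*(x*b^3/(1-x)^3) = (48*(x*b^3))/(1-x)^3 := by ring
    rw [e1, e2, div_le_div_iff₀ h1x (by positivity)]
    nlinarith [mul_le_mul_of_nonneg_left hsq
        (show (0:ℝ) ≤ 3*(x*b)*(1-x) by positivity),
      mul_nonneg (mul_nonneg (sub_nonneg.mpr hx3) (pow_nonneg hb 3)) h1x.le]
  have hq2 : Real.pi ≤ 256*(x*b^3/(1-x)^3) := by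
    have e2 : 256*(x*b^3/(1-x)^3) = (256*(x*b^3))/(1-x)^3 := by ring
    rw [e2, le_div_iff₀ (by positivity)]
    have hcube : (1-x)^3 < (4*(x*b))^3 := pow_lt_pow_left₀ hkey h1x.le (by norm_num)
    have hcube' : (4*(x*b))^3 = 64*(x^3*b^3) := by ring
    nlinarith [mul_le_mul_of_nonneg_right Real.pi_le_four (pow_nonneg h1x.le 3),
      mul_nonneg (sub_nonneg.mpr hx3) (pow_nonneg hb 3)]
  have hq3 : b^2*x/(2*(1-x)^2) ≤ 2*(x*b^3/(1-x)^3) := by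
    have e2 : 2*(x*b^3/(1-x)^3) = (2*(x*b^3))/(1-x)^3 := by ring
    rw [e2, div_le_div_iff₀ (by positivity) (by positivity)]
    nlinarith [mul_le_mul_of_nonneg_left hkey.le
        (show (0:ℝ) ≤ b^2*x*(1-x)^2 by positivity),
      mul_nonneg (mul_nonneg (sub_nonneg.mpr hx2) (pow_nonneg hb 3)) (sq_nonneg (1-x))]
  have hR : 400*x*b^3/(1-x)^3 = 400*(x*b^3/(1-x)^3) := by ring
  have hR0 : 0 ≤ x*b^3/(1-x)^3 := by positivity
  rw [hR]
  linarith

set_option maxHeartbeats 1000000 in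
/-- There is a constant `C > 0` such that for `0 < x < 1` and real `s`,
`|Log((1-x)/(1-xe^{is})) - isx/(1-x) + s²x/(2(1-x)²)| ≤ C x |s|³/(1-x)³`. -/
theorem log_ratio_taylor_bound :
    ∃ C > (0 : ℝ), ∀ x : ℝ, 0 < x → x < 1 → ∀ s : ℝ,
      ‖Complex.log ((1 - (x : ℂ)) / (1 - (x : ℂ) * Complex.exp ((s : ℂ) * Complex.I)))
          - Complex.I * (s : ℂ) * (x : ℂ) / (1 - (x : ℂ))
          + (s : ℂ) ^ 2 * (x : ℂ) / (2 * (1 - (x : ℂ)) ^ 2)‖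
        ≤ C * x * |s| ^ 3 / (1 - x) ^ 3 := by
  refine ⟨400, by norm_num, ?_⟩
  intro x hx0 hx1 s
  have h1x : (0:ℝ) < 1 - x := by linarith
  have habs_s : (0:ℝ) ≤ |s| := abs_nonneg s
  set S : ℂ := (s:ℂ) with hS
  set X : ℂ := (x:ℂ) with hXdef
  set E : ℂ := Complex.exp (S * I) with hE
  set e : ℂ := E - 1 with he
  set d : ℂ := 1 - X * E with hd
  have hnX : ‖X‖ = x := by
    rw [hXdef, Complex.norm_real, Real.norm_eq_abs, _root_.abs_of_pos hx0]
  have h1Xc : ((1-x : ℝ) : ℂ) = 1 - X := by rw [hXdef]; push_cast; ring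
  have hn1X : ‖(1:ℂ) - X‖ = 1 - x := by
    rw [← h1Xc, Complex.norm_real, Real.norm_eq_abs, _root_.abs_of_pos h1x]
  have hX1 : (1:ℂ) - X ≠ 0 := by
    rw [← h1Xc]
    exact_mod_cast h1x.ne'
  have hnE : ‖E‖ = 1 := by
    rw [hE, hS]
    exact Complex.norm_exp_ofReal_mul_I s
  have hnd : 1 - x ≤ ‖d‖ := by
    have h := norm_sub_norm_le (1:ℂ) (X*E)
    rw [norm_one, norm_mul, hnX, hnE, mul_one] at h
    rw [hd]
    exact h
  have hd0 : d ≠ 0 := by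
    intro h
    rw [h, norm_zero] at hnd
    linarith
  have hnS : ‖S‖ = |s| := by
    rw [hS, Complex.norm_real, Real.norm_eq_abs]
  have hne : ‖e‖ ≤ 2*|s| := by rw [he, hE, hS]; exact aux_exp1 s
  have hn2 : ‖(2:ℂ)‖ = 2 := by norm_num
  -- the remainder of exp
  rcases le_or_gt (x*|s|/(1-x)) (1/4) with hu | hu
  · -- small case
    have hu0 : 0 ≤ x*|s|/(1-x) := by positivity
    set v : ℂ := X/(1-X) with hv
    set W : ℂ := v*e with hWdef
    have hnv : ‖v‖ = x/(1-x) := by rw [hv, norm_div, hnX, hn1X]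
    have hnW : ‖W‖ ≤ 2*(x*|s|/(1-x)) := by
      rw [hWdef, norm_mul, hnv]
      calc x/(1-x)*‖e‖ ≤ x/(1-x)*(2*|s|) := by
            apply mul_le_mul_of_nonneg_left hne (by positivity)
        _ = 2*(x*|s|/(1-x)) := by ring
    have hnWhalf : ‖W‖ ≤ 1/2 := hnW.trans (by linarith)
    have hW1 : (1:ℂ) - W ≠ 0 := by
      intro h
      rw [sub_eq_zero] at h
      rw [← h, norm_one] at hnWhalf
      linarith
    have hn1W : 1/2 ≤ ‖1-W‖ := by
      have h := norm_sub_norm_le (1:ℂ) W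
      rw [norm_one] at h
      linarith
    set w : ℂ := X*e/d with hw
    have h1W : (1:ℂ) - W = d/(1-X) := by
      rw [hWdef, hv, he, hd]
      field_simp
      ring
    have hwW : w = W/(1-W) := by
      rw [hw, h1W, hWdef, hv, he, hd]
      field_simp
    have hnw : ‖w‖ ≤ 2*(x*|s|/(1-x)) := by
      rw [hw, norm_div, norm_mul, hnX]
      calc x*‖e‖/‖d‖ ≤ (x*(2*|s|))/(1-x) :=
            div_le_div₀ (by positivity) (mul_le_mul_of_nonneg_left hne hx0.le) h1x hnd
        _ = 2*(x*|s|/(1-x)) := by ring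
    have hnwhalf : ‖w‖ ≤ 1/2 := hnw.trans (by linarith)
    have hzw : (1-X)/d = 1 + w := by
      have hd0' : (1:ℂ) - X*E ≠ 0 := by rw [← hd]; exact hd0
      rw [hw, he, hd]
      field_simp
      ring
    have hwlt : ‖w‖ < 1 := lt_of_le_of_lt hnwhalf (by norm_num)
    have hlog := Complex.norm_log_sub_logTaylor_le 2 hwlt
    have hT3 : Complex.logTaylor 3 w = w - w^2/2 := by
      show Complex.logTaylor (2+1) w = _
      rw [Complex.logTaylor_succ, Complex.logTaylor_succ, Complex.logTaylor_succ,
        Complex.logTaylor_zero]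
      simp
      ring
    have hA : ‖Complex.log (1+w) - (w - w^2/2)‖ ≤ 6*(x*|s|/(1-x))^3 := by
      rw [← hT3]
      refine le_trans hlog ?_
      have hinv : (1-‖w‖)⁻¹ ≤ 2 := by
        have h2 : (1:ℝ)/2 ≤ 1 - ‖w‖ := by linarith
        calc (1-‖w‖)⁻¹ ≤ ((1:ℝ)/2)⁻¹ := by
              apply inv_anti₀ (by norm_num) h2
          _ = 2 := by norm_num
      have hinv0 : 0 ≤ (1-‖w‖)⁻¹ := inv_nonneg.mpr (by linarith)
      have hwp : ‖w‖^3 ≤ (2*(x*|s|/(1-x)))^3 :=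
        pow_le_pow_left₀ (norm_nonneg w) hnw 3
      have hprod : ‖w‖^3*(1-‖w‖)⁻¹ ≤ (2*(x*|s|/(1-x)))^3*2 :=
        mul_le_mul hwp hinv hinv0 (by positivity)
      have hgoal : ‖w‖^3 * (1-‖w‖)⁻¹/3 ≤ 6*(x*|s|/(1-x))^3 := by
        nlinarith [pow_nonneg hu0 3]
      rw [show ((2:ℕ):ℝ) + 1 = 3 by norm_num]; exact hgoal
    have hstepA := aux_stepA W hW1
    rw [← hwW] at hstepA
    have hstepCC : W + W^2/2 - (I*S*X/(1-X) - S^2*X/(2*(1-X)^2))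
        = v*(e - S*I + S^2/2) + v^2/2*((e - S*I)*(e + S*I)) := by
      have hP : S^2*X/(2*(1-X)^2) = S^2*(v+v^2)/2 := by
        rw [hv]
        field_simp
        ring
      have hQ : I*S*X/(1-X) = I*S*v := by rw [hv, mul_div_assoc]
      rw [hP, hQ, hWdef]
      exact aux_stepC v e S
    have hdecomp : Complex.log ((1-X)/d) - I*S*X/(1-X) + S^2*X/(2*(1-X)^2)
        = (Complex.log (1+w) - (w - w^2/2))
          + (-(W^4/(2*(1-W)^2)) + (v*(e - S*I + S^2/2) + v^2/2*((e - S*I)*(e + S*I)))) := by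
      rw [hzw]
      linear_combination hstepA + hstepCC
    rw [hdecomp]
    -- norm bounds for the pieces
    have hB : ‖-(W^4/(2*(1-W)^2))‖ ≤ 8*(x*|s|/(1-x))^3 := by
      have hBnorm : ‖-(W^4/(2*(1-W)^2))‖ = ‖W‖^4/(2*‖1-W‖^2) := by
        simp only [norm_neg, norm_div, norm_mul, norm_pow, hn2]
      rw [hBnorm]
      calc ‖W‖^4/(2*‖1-W‖^2) ≤ (2*(x*|s|/(1-x)))^4/(2*((1:ℝ)/2)^2) := by
            gcongr
        _ ≤ 8*(x*|s|/(1-x))^3 := aux_u4 _ hu0 hu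
    have he3 : ‖e - S*I + S^2/2‖ ≤ 4*|s|^3 := by rw [he, hE, hS]; exact aux_exp3 s
    have he2 : ‖e - S*I‖ ≤ 3*s^2 := by rw [he, hE, hS]; exact aux_exp2 s
    have hSI : ‖S*I‖ = |s| := by
      simp only [norm_mul, Complex.norm_I, hnS, mul_one]
    have heP : ‖e + S*I‖ ≤ 3*|s| := by
      calc ‖e + S*I‖ ≤ ‖e‖ + ‖S*I‖ := norm_add_le _ _
        _ = ‖e‖ + |s| := by rw [hSI]
        _ ≤ 3*|s| := by linarith
    have hC : ‖v*(e - S*I + S^2/2)‖ ≤ 4*(x/(1-x))*|s|^3 := by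
      have : ‖v*(e - S*I + S^2/2)‖ = x/(1-x)*‖e - S*I + S^2/2‖ := by
        simp only [norm_mul, hnv]
      rw [this]
      calc x/(1-x)*‖e - S*I + S^2/2‖ ≤ x/(1-x)*(4*|s|^3) :=
            mul_le_mul_of_nonneg_left he3 (by positivity)
        _ = 4*(x/(1-x))*|s|^3 := by ring
    have hD : ‖v^2/2*((e - S*I)*(e + S*I))‖ ≤ (9/2)*(x/(1-x))^2*|s|^3 := by
      have : ‖v^2/2*((e - S*I)*(e + S*I))‖ = (x/(1-x))^2/2*(‖e - S*I‖*‖e + S*I‖) := by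
        simp only [norm_mul, norm_div, norm_pow, hn2, hnv]
      rw [this]
      calc (x/(1-x))^2/2*(‖e - S*I‖*‖e + S*I‖)
          ≤ (x/(1-x))^2/2*((3*s^2)*(3*|s|)) := by
            apply mul_le_mul_of_nonneg_left ?_ (by positivity)
            exact mul_le_mul he2 heP (norm_nonneg _) (by positivity)
        _ = (9/2)*(x/(1-x))^2*|s|^3 := by
            rw [show s^2 = |s|^2 from (_root_.sq_abs s).symm]
            ring
    -- combine
    have htri : ‖(Complex.log (1+w) - (w - w^2/2))
          + (-(W^4/(2*(1-W)^2)) + (v*(e - S*I + S^2/2) + v^2/2*((e - S*I)*(e + S*I))))‖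
        ≤ 6*(x*|s|/(1-x))^3 + (8*(x*|s|/(1-x))^3
            + (4*(x/(1-x))*|s|^3 + (9/2)*(x/(1-x))^2*|s|^3)) :=
      le_trans (norm_add_le _ _) (add_le_add hA (le_trans (norm_add_le _ _)
        (add_le_add hB (le_trans (norm_add_le _ _) (add_le_add hC hD)))))
    refine htri.trans ?_
    exact aux_small x |s| hx0 hx1 habs_s
  · -- large case
    have hkey : 1 - x < 4*(x*|s|) := by
      rw [lt_div_iff₀ h1x] at hu
      linarith
    have hd_le : ‖d‖ ≤ (1-x) + 2*(x*|s|) := by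
      have hde : d = (1-X) - X*e := by rw [hd, he]; ring
      rw [hde]
      calc ‖(1-X) - X*e‖ ≤ ‖(1:ℂ)-X‖ + ‖X*e‖ := norm_sub_le _ _
        _ ≤ (1-x) + x*(2*|s|) := by
            rw [hn1X, norm_mul, hnX]
            gcongr
        _ = (1-x) + 2*(x*|s|) := by ring
    have hre : |(Complex.log ((1-X)/d)).re| ≤ 2*(x*|s|/(1-x)) := by
      rw [Complex.log_re]
      have habsz : ‖(1-X)/d‖ = (1-x)/‖d‖ := by
        rw [norm_div, hn1X]
      rw [habsz]
      have hdpos : 0 < ‖d‖ := lt_of_lt_of_le h1x hnd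
      have ht1 : (1-x)/‖d‖ ≤ 1 := by
        rw [div_le_one hdpos]
        exact hnd
      have ht0 : 0 < (1-x)/‖d‖ := by positivity
      have hlog_nonpos : Real.log ((1-x)/‖d‖) ≤ 0 :=
        Real.log_nonpos ht0.le ht1
      rw [abs_of_nonpos hlog_nonpos, ← Real.log_inv, inv_div]
      calc Real.log (‖d‖/(1-x)) ≤ ‖d‖/(1-x) - 1 :=
            Real.log_le_sub_one_of_pos (by positivity)
        _ ≤ ((1-x) + 2*(x*|s|))/(1-x) - 1 := by gcongr
        _ = 2*(x*|s|/(1-x)) := by field_simp; ring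
    have him : |(Complex.log ((1-X)/d)).im| ≤ Real.pi := by
      rw [Complex.log_im]
      exact Complex.abs_arg_le_pi _
    have hlogb : ‖Complex.log ((1-X)/d)‖ ≤ 2*(x*|s|/(1-x)) + Real.pi := by
      refine le_trans ?_ (add_le_add hre him)
      exact Complex.norm_le_abs_re_add_abs_im _
    have hP1 : ‖I*S*X/(1-X)‖ = x*|s|/(1-x) := by
      simp only [norm_div, norm_mul, Complex.norm_I, hnS, hnX, hn1X, one_mul]
      ring
    have hP2 : ‖S^2*X/(2*(1-X)^2)‖ = s^2*x/(2*(1-x)^2) := by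
      simp only [norm_div, norm_mul, norm_pow, hnS, hnX, hn1X, hn2, _root_.sq_abs]
    have htri : ‖Complex.log ((1-X)/d) - I*S*X/(1-X) + S^2*X/(2*(1-X)^2)‖
        ≤ (2*(x*|s|/(1-x)) + Real.pi) + x*|s|/(1-x) + s^2*x/(2*(1-x)^2) := by
      calc ‖Complex.log ((1-X)/d) - I*S*X/(1-X) + S^2*X/(2*(1-X)^2)‖
          ≤ ‖Complex.log ((1-X)/d) - I*S*X/(1-X)‖ + ‖S^2*X/(2*(1-X)^2)‖ := norm_add_le _ _
        _ ≤ ‖Complex.log ((1-X)/d)‖ + ‖I*S*X/(1-X)‖ + ‖S^2*X/(2*(1-X)^2)‖ := by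
            gcongr
            exact norm_sub_le _ _
        _ ≤ _ := by
            rw [hP1, hP2]
            gcongr
    refine htri.trans ?_
    have := aux_large x |s| hx0 hx1 habs_s hkey
    rw [_root_.sq_abs] at this
    exact this
end

section
/- Let B = √6/π. Uniformly in v ≥ -log(n)/8, as n → ∞, the product over odd integers 2k-1 > B√n (v + log(B√n)) of (1 - e^{-(2k-1)/(B√n)}) converges to e^{-(1/2) e^{-v}}. Precisely: for every ε > 0 there is N such that for all n ≥ N and all v ≥ -log(n)/8, the ratio of the product to e^{-(1/2)e^{-v}} lies in (1-ε, 1+ε). -/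
open Real

/-- Tail geometric sum of `exp(-(a*k+b))`. -/
lemma aux_hasSum_tail_exp (a b : ℝ) (ha : 0 < a) (m : ℕ) :
    HasSum (fun k : ℕ => if m ≤ k then Real.exp (-(a * k + b)) else 0)
      (Real.exp (-(a * m + b)) / (1 - Real.exp (-a))) := by
  have hr0 : (0:ℝ) ≤ Real.exp (-a) := (Real.exp_pos _).le
  have hr1 : Real.exp (-a) < 1 := Real.exp_lt_one_iff.mpr (by linarith)
  have h1 := (hasSum_geometric_of_lt_one hr0 hr1).mul_left (Real.exp (-(a * m + b)))
  set F : ℕ → ℝ := fun k => if m ≤ k then Real.exp (-(a * k + b)) else 0 with hF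
  have hshift : (fun k : ℕ => F (k + m)) =
      fun k : ℕ => Real.exp (-(a * m + b)) * Real.exp (-a) ^ k := by
    funext k
    have : m ≤ k + m := Nat.le_add_left m k
    rw [hF]
    simp only [this, if_true]
    rw [← Real.exp_nat_mul, ← Real.exp_add]
    congr 1
    push_cast
    ring
  have h2 : HasSum (fun k : ℕ => F (k + m))
      (Real.exp (-(a * m + b)) * (1 - Real.exp (-a))⁻¹) := by
    rw [hshift]; exact h1
  have h3 := (hasSum_nat_add_iff (f := F) m).mp h2
  have h4 : ∑ i ∈ Finset.range m, F i = 0 := by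
    apply Finset.sum_eq_zero
    intro i hi
    simp only [Finset.mem_range] at hi
    rw [hF]
    simp only [if_neg (by omega : ¬ m ≤ i)]
  rw [h4, add_zero] at h3
  rw [div_eq_mul_inv]
  exact h3

lemma aux_log_one_sub_le {x : ℝ} (hx0 : 0 ≤ x) (hx : x ≤ 1/2) : Real.log (1 - x) ≤ -x := by
  have h1 : (0:ℝ) < 1 - x := by linarith
  have := Real.log_le_sub_one_of_pos h1
  linarith

lemma aux_le_log_one_sub {x : ℝ} (hx0 : 0 ≤ x) (hx : x ≤ 1/2) :
    -x - 2 * x ^ 2 ≤ Real.log (1 - x) := by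
  have h1 : (0:ℝ) < 1 - x := by linarith
  have h2 : Real.log (1 - x)⁻¹ ≤ (1 - x)⁻¹ - 1 := Real.log_le_sub_one_of_pos (by positivity)
  rw [Real.log_inv] at h2
  have h3 : (1 - x)⁻¹ - 1 = x / (1 - x) := by field_simp; ring
  have h4 : x / (1 - x) ≤ x + 2 * x ^ 2 := by
    rw [div_le_iff₀ h1]
    nlinarith
  linarith

lemma aux_one_sub_exp_le {u : ℝ} (hu : 0 ≤ u) : 1 - Real.exp (-u) ≤ u := by
  have := Real.add_one_le_exp (-u)
  linarith

lemma aux_le_one_sub_exp {u : ℝ} (hu : 0 ≤ u) : u * Real.exp (-u) ≤ 1 - Real.exp (-u) := by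
  have h1 := Real.add_one_le_exp u
  have h2 : (0:ℝ) < Real.exp (-u) := Real.exp_pos _
  nlinarith [Real.exp_neg u ▸ (mul_le_mul_of_nonneg_right h1 h2.le),
    Real.exp_neg u, mul_inv_cancel₀ (ne_of_gt (Real.exp_pos u))]

lemma aux_exp_le {u : ℝ} (hu : 0 ≤ u) (hu2 : u ≤ 1/2) : Real.exp u ≤ 1 + 2 * u := by
  have h1 : Real.exp (-u) ≥ 1 - u := by have := Real.add_one_le_exp (-u); linarith
  have h2 : (0:ℝ) < 1 - u := by linarith
  have h3 : Real.exp u = (Real.exp (-u))⁻¹ := by rw [← Real.exp_neg, neg_neg]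
  rw [h3]
  have h4 : (Real.exp (-u))⁻¹ ≤ (1 - u)⁻¹ := by
    apply inv_anti₀ h2 h1
  calc (Real.exp (-u))⁻¹ ≤ (1-u)⁻¹ := h4
    _ ≤ 1 + 2*u := by rw [inv_le_iff_one_le_mul₀ h2]; nlinarith
set_option maxHeartbeats 1000000 in
/-- Uniformly in `v ≥ -log(n)/8`, as `n → ∞`,
`∏_{2k-1 > B√n(v + log(B√n))} (1 - e^{-(2k-1)/(B√n)}) ∼ e^{-(1/2)e^{-v}}`,
where `B = √6/π`; here `2k-1` runs over odd positive integers, written `2k+1`, `k : ℕ`. -/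
theorem prod_large_parts_asymptotic :
    ∀ ε > (0 : ℝ), ∃ N : ℕ, ∀ n : ℕ, N ≤ n → ∀ v : ℝ, -Real.log n / 8 ≤ v →
      (∏' k : ℕ,
          if (Real.sqrt 6 / π) * Real.sqrt n * (v + Real.log ((Real.sqrt 6 / π) * Real.sqrt n))
              < 2 * (k : ℝ) + 1 then
            1 - Real.exp (-(2 * (k : ℝ) + 1) / ((Real.sqrt 6 / π) * Real.sqrt n))
          else 1)
        / Real.exp (-(1/2) * Real.exp (-v)) ∈ Set.Ioo (1 - ε) (1 + ε) := by
  intro ε hε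
  set δ := min (ε/2) (1/2) with hδdef
  have hδ0 : 0 < δ := lt_min (by linarith) one_half_pos
  have hδhalf : δ ≤ 1/2 := min_le_right _ _
  have hδε : δ ≤ ε/2 := min_le_left _ _
  obtain ⟨N₀, hN₀⟩ := exists_nat_gt ((5/δ)^4)
  refine ⟨max N₀ 121, fun n hn v hv => ?_⟩
  have hn121 : (121:ℕ) ≤ n := le_trans (le_max_right _ _) hn
  have hnN₀ : ((5/δ)^4 : ℝ) < n := by
    refine lt_of_lt_of_le hN₀ ?_
    exact_mod_cast le_trans (le_max_left _ _) hn
  have hnR : (121:ℝ) ≤ n := by exact_mod_cast hn121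
  have hn0 : (0:ℝ) < n := by linarith
  -- basic facts about s = B√n
  have hπ := Real.pi_pos
  have hsqn : (11:ℝ) ≤ Real.sqrt n := by
    have h1 : Real.sqrt 121 ≤ Real.sqrt n := Real.sqrt_le_sqrt hnR
    have h2 : Real.sqrt 121 = 11 := by
      rw [show (121:ℝ) = 11^2 by norm_num, Real.sqrt_sq (by norm_num : (0:ℝ) ≤ 11)]
    linarith
  have hsqn0 : (0:ℝ) < Real.sqrt n := by linarith
  have h6lb : (2.4:ℝ) ≤ Real.sqrt 6 := by
    have h1 := Real.sq_sqrt (by norm_num : (0:ℝ) ≤ 6)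
    have h2 := Real.sqrt_nonneg 6
    nlinarith
  have hπlt : π < 3.15 := Real.pi_lt_d2
  have hB34 : (3/4:ℝ) ≤ Real.sqrt 6 / π := by
    rw [le_div_iff₀ hπ]; linarith
  have hB1 : Real.sqrt 6 / π ≤ 1 := by
    rw [div_le_one hπ]
    have h1 : Real.sqrt 6 ≤ Real.sqrt 9 := Real.sqrt_le_sqrt (by norm_num)
    have h2 : Real.sqrt 9 = 3 := by
      rw [show (9:ℝ) = 3^2 by norm_num, Real.sqrt_sq (by norm_num : (0:ℝ) ≤ 3)]
    have := Real.pi_gt_three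
    linarith
  have hB0 : (0:ℝ) < Real.sqrt 6 / π := by linarith
  set s := Real.sqrt 6 / π * Real.sqrt n with hsdef
  have hs0 : (0:ℝ) < s := mul_pos hB0 hsqn0
  have hs_lb : (3/4:ℝ) * Real.sqrt n ≤ s :=
    mul_le_mul_of_nonneg_right hB34 hsqn0.le
  have hs8 : (8:ℝ) ≤ s := by
    have h1 : (3/4:ℝ)*11 ≤ (3/4)*Real.sqrt n :=
      mul_le_mul_of_nonneg_left hsqn (by norm_num)
    linarith
  have hslog : Real.log s = Real.log (Real.sqrt 6 / π) + Real.log n / 2 := by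
    rw [hsdef, Real.log_mul (ne_of_gt hB0) (ne_of_gt hsqn0), Real.log_sqrt hn0.le]
  have hlogB_lb : -(1/3:ℝ) ≤ Real.log (Real.sqrt 6 / π) := by
    have h1 : Real.log (3/4:ℝ) ≤ Real.log (Real.sqrt 6 / π) :=
      Real.log_le_log (by norm_num) hB34
    have h2 : Real.log (3/4:ℝ) = -Real.log (4/3) := by
      rw [← Real.log_inv]; norm_num
    have h3 : Real.log (4/3:ℝ) ≤ 4/3 - 1 := Real.log_le_sub_one_of_pos (by norm_num)
    linarith
  have hlogn2 : (2:ℝ) ≤ Real.log n := by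
    have he : Real.exp 2 ≤ n := by
      have h1 := Real.exp_one_lt_d9
      have h2 : Real.exp 2 = Real.exp 1 * Real.exp 1 := by
        rw [← Real.exp_add]; norm_num
      have h3 : Real.exp 1 * Real.exp 1 ≤ 2.7182818286 * 2.7182818286 :=
        mul_le_mul h1.le h1.le (Real.exp_pos 1).le (by norm_num)
      rw [h2]; nlinarith
    exact (Real.le_log_iff_exp_le hn0).mpr he
  have hlogn0 : (0:ℝ) ≤ Real.log n := by linarith
  have hlogs_lb : -(1/3) + Real.log n / 2 ≤ Real.log s := by
    rw [hslog]; linarith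
  -- T and m
  set T := s * (v + Real.log s) with hTdef
  have hvs : 5/12 ≤ v + Real.log s := by
    have h1 : -Real.log n / 8 ≤ v := hv
    linarith
  have hT1 : (1:ℝ) ≤ T := by
    rw [hTdef]
    have h1 : (8:ℝ)*(5/12) ≤ s*(v + Real.log s) :=
      mul_le_mul hs8 hvs (by norm_num) (by linarith)
    linarith
  set m := ⌊(T-1)/2⌋₊ + 1 with hmdef
  have hfl0 : (0:ℝ) ≤ (T-1)/2 := by linarith
  have hmcast : ((m:ℝ)) = (⌊(T-1)/2⌋₊ : ℝ) + 1 := by rw [hmdef]; push_cast; ring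
  have hm_lb : T < 2*(m:ℝ)+1 := by
    have h1 := Nat.lt_floor_add_one ((T-1)/2)
    rw [hmcast] at *; linarith
  have hm_ub : 2*(m:ℝ)+1 ≤ T + 2 := by
    have h1 := Nat.floor_le hfl0
    rw [hmcast]; linarith
  have hcond : ∀ k : ℕ, (T < 2*(k:ℝ)+1) ↔ m ≤ k := by
    intro k
    constructor
    · intro h
      have h1 : (T-1)/2 < (k:ℝ) := by linarith
      have h2 : ⌊(T-1)/2⌋₊ < k := (Nat.floor_lt hfl0).mpr h1
      omega
    · intro h
      have h2 : ((m:ℝ)) ≤ (k:ℝ) := by exact_mod_cast h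
      linarith
  -- A and the sums S, S₂
  set A := Real.exp (-(v + Real.log s)) with hAdef
  have hA0 : (0:ℝ) < A := Real.exp_pos _
  have hA_eqT : A = Real.exp (-(T/s)) := by
    rw [hAdef, hTdef]; congr 1; field_simp
  have hsA : s * A = Real.exp (-v) := by
    rw [hAdef]
    nth_rewrite 1 [← Real.exp_log hs0]
    rw [← Real.exp_add]
    congr 1
    ring
  set x : ℕ → ℝ := fun k => if T < 2*(k:ℝ)+1 then Real.exp (-(2*(k:ℝ)+1)/s) else 0 with hxdef
  have hx_rw : x = fun k => if m ≤ k then Real.exp (-((2/s) * k + 1/s)) else 0 := by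
    funext k
    rw [hxdef]
    simp only
    rw [if_congr (hcond k) (by rw [show (-(2*(k:ℝ)+1))/s = -((2/s)*k + 1/s) by
      field_simp; try ring]) rfl]
  set S := Real.exp (-((2/s) * m + 1/s)) / (1 - Real.exp (-(2/s))) with hSdef
  have hSsum : HasSum x S := by
    rw [hx_rw, hSdef]; exact aux_hasSum_tail_exp (2/s) (1/s) (by positivity) m
  have hx2_rw : (fun k => (x k)^2) =
      fun k => if m ≤ k then Real.exp (-((4/s) * k + 2/s)) else 0 := by
    funext k
    rw [hx_rw]
    by_cases h : m ≤ k
    · simp only [h, if_true]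
      rw [← Real.exp_nat_mul]
      congr 1; push_cast; field_simp; try ring
    · simp only [h, if_false]; norm_num
  set S₂ := Real.exp (-((4/s) * m + 2/s)) / (1 - Real.exp (-(4/s))) with hS2def
  have hS2sum : HasSum (fun k => (x k)^2) S₂ := by
    rw [hx2_rw, hS2def]; exact aux_hasSum_tail_exp (4/s) (2/s) (by positivity) m
  -- bounds on S and S₂
  have hd_pos : (0:ℝ) < 1 - Real.exp (-(2/s)) := by
    have h1 : Real.exp (-(2/s)) < 1 := Real.exp_lt_one_iff.mpr (by
      have : (0:ℝ) < 2/s := by positivity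
      linarith)
    linarith
  have hd2_pos : (0:ℝ) < 1 - Real.exp (-(4/s)) := by
    have h1 : Real.exp (-(4/s)) < 1 := Real.exp_lt_one_iff.mpr (by
      have : (0:ℝ) < 4/s := by positivity
      linarith)
    linarith
  have hdiv_eq : ∀ c : ℝ, (2*(c:ℝ)+1)/s = (2/s)*c + 1/s := by
    intro c; field_simp; try ring
  have hem_ub : Real.exp (-((2/s) * m + 1/s)) ≤ A := by
    rw [hA_eqT]
    apply Real.exp_le_exp.mpr
    have h1 : T/s ≤ (2*(m:ℝ)+1)/s := (div_le_div_iff_of_pos_right hs0).mpr hm_lb.le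
    rw [hdiv_eq m] at h1
    linarith
  have hem_lb : A * Real.exp (-(2/s)) ≤ Real.exp (-((2/s) * m + 1/s)) := by
    rw [hA_eqT, ← Real.exp_add]
    apply Real.exp_le_exp.mpr
    have h1 : (2*(m:ℝ)+1)/s ≤ (T+2)/s := (div_le_div_iff_of_pos_right hs0).mpr hm_ub
    rw [hdiv_eq m] at h1
    have h2 : (T+2)/s = T/s + 2/s := by ring
    rw [h2] at h1
    linarith
  have h2s_half : 2/s ≤ 1/2 := by
    rw [div_le_iff₀ hs0]; linarith
  have hS_ub : S ≤ s*A/2 + 2*A := by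
    have h1 : S ≤ A / ((2/s) * Real.exp (-(2/s))) := by
      rw [hSdef]
      exact div_le_div₀ hA0.le hem_ub (by positivity) (aux_le_one_sub_exp (by positivity))
    have h2 : A / ((2/s) * Real.exp (-(2/s))) = A * (s/2) * Real.exp (2/s) := by
      rw [Real.exp_neg]; field_simp; try ring
    have h3 : Real.exp (2/s) ≤ 1 + 2*(2/s) := aux_exp_le (by positivity) h2s_half
    have h4 : A * (s/2) * Real.exp (2/s) ≤ A * (s/2) * (1 + 2*(2/s)) :=
      mul_le_mul_of_nonneg_left h3 (by positivity)
    have h5 : A * (s/2) * (1 + 2*(2/s)) = s*A/2 + 2*A := by field_simp; try ring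
    linarith
  have hS_lb : s*A/2 - A ≤ S := by
    have h1 : A * Real.exp (-(2/s)) / (2/s) ≤ S := by
      rw [hSdef]
      exact div_le_div₀ (Real.exp_pos _).le hem_lb hd_pos (aux_one_sub_exp_le (by positivity))
    have h2 : 1 - 2/s ≤ Real.exp (-(2/s)) := by
      have := Real.add_one_le_exp (-(2/s)); linarith
    have h3 : A * Real.exp (-(2/s)) / (2/s) = A * Real.exp (-(2/s)) * (s/2) := by
      field_simp; try ring
    have h4 : A * (1-2/s) * (s/2) ≤ A * Real.exp (-(2/s)) * (s/2) :=
      mul_le_mul_of_nonneg_right (mul_le_mul_of_nonneg_left h2 hA0.le) (by positivity)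
    have h5 : A * (1-2/s) * (s/2) = s*A/2 - A := by field_simp; try ring
    linarith
  have hS2_ub : S₂ ≤ A^2 * s / 2 := by
    have hem2 : Real.exp (-((4/s) * m + 2/s)) ≤ A^2 := by
      rw [hA_eqT, sq, ← Real.exp_add]
      apply Real.exp_le_exp.mpr
      have h2 : (-(T/s)) + (-(T/s)) = (-(2*T))/s := by ring
      have h3 : -((4/s)*(m:ℝ) + 2/s) = (-(4*(m:ℝ)+2))/s := by ring
      rw [h2, h3]
      apply (div_le_div_iff_of_pos_right hs0).mpr
      linarith
    have hd2_lb : 2/s ≤ 1 - Real.exp (-(4/s)) := by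
      have h1 := aux_le_one_sub_exp (u := 4/s) (by positivity)
      have h2 : 1 - 4/s ≤ Real.exp (-(4/s)) := by
        have := Real.add_one_le_exp (-(4/s)); linarith
      have h3 : (4:ℝ)/s ≤ 1/2 := by rw [div_le_iff₀ hs0]; linarith
      have hu0 : (0:ℝ) < 4/s := by positivity
      have ha : (4/s)*(1-4/s) ≤ (4/s)*Real.exp (-(4/s)) :=
        mul_le_mul_of_nonneg_left h2 hu0.le
      have hb : (0:ℝ) ≤ (4/s)*(1/2 - 4/s) := mul_nonneg hu0.le (by linarith)
      have hc : (4/s)*(1-4/s) = (4/s)*(1/2 - 4/s) + 2/s := by field_simp; try ring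
      linarith
    have h1 : S₂ ≤ A^2 / (2/s) := by
      rw [hS2def]
      exact div_le_div₀ (by positivity) hem2 (by positivity) hd2_lb
    have h2 : A^2 / (2/s) = A^2 * s / 2 := by field_simp; try ring
    linarith
  have hS2_0 : (0:ℝ) ≤ S₂ := by rw [hS2def]; positivity
  -- size bounds via n
  have he13 : Real.exp (1/3 : ℝ) ≤ 5/3 := by
    have := aux_exp_le (by norm_num : (0:ℝ) ≤ 1/3) (by norm_num)
    linarith
  have hA_ub : A ≤ 5/3 * Real.exp (-(1/4) * Real.log n) := by
    have h1 : A ≤ Real.exp (1/3 - (3/8) * Real.log n) := by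
      rw [hAdef]
      apply Real.exp_le_exp.mpr
      have : -Real.log n / 8 ≤ v := hv
      linarith
    have h2 : Real.exp (1/3 - (3/8) * Real.log n) ≤ 5/3 * Real.exp (-(3/8) * Real.log n) := by
      rw [show (1/3 - (3/8) * Real.log n : ℝ) = 1/3 + -(3/8) * Real.log n by ring,
        Real.exp_add]
      exact mul_le_mul_of_nonneg_right he13 (Real.exp_pos _).le
    have h3 : Real.exp (-(3/8) * Real.log n) ≤ Real.exp (-(1/4) * Real.log n) := by
      apply Real.exp_le_exp.mpr; linarith
    have h4 : 5/3 * Real.exp (-(3/8) * Real.log n) ≤ 5/3 * Real.exp (-(1/4) * Real.log n) :=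
      mul_le_mul_of_nonneg_left h3 (by norm_num)
    linarith
  have hA2s_ub : A^2 * s ≤ 5/3 * Real.exp (-(1/4) * Real.log n) := by
    have h0 : A^2 * s = Real.exp (2 * -(v + Real.log s) + Real.log s) := by
      rw [Real.exp_add, Real.exp_log hs0]
      congr 1
      rw [hAdef, sq, ← Real.exp_add]
      congr 1
      ring
    have h1 : 2 * -(v + Real.log s) + Real.log s ≤ 1/3 + -(1/4) * Real.log n := by
      have hv' : -Real.log n / 8 ≤ v := hv
      linarith
    rw [h0]
    calc Real.exp (2 * -(v + Real.log s) + Real.log s)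
        ≤ Real.exp (1/3 + -(1/4) * Real.log n) := Real.exp_le_exp.mpr h1
      _ = Real.exp (1/3) * Real.exp (-(1/4) * Real.log n) := Real.exp_add _ _
      _ ≤ 5/3 * Real.exp (-(1/4) * Real.log n) :=
          mul_le_mul_of_nonneg_right he13 (Real.exp_pos _).le
  set K := 5 * Real.exp (-(1/4) * Real.log n) with hKdef
  have hKey : 2*A + A^2*s ≤ K := by
    rw [hKdef]; linarith
  have hK0 : (0:ℝ) < K := by rw [hKdef]; positivity
  have hKδ : K < δ := by
    have hE4 : (Real.exp ((1/4) * Real.log n))^4 = n := by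
      rw [← Real.exp_nat_mul, show ((4:ℕ):ℝ) * ((1/4) * Real.log n) = Real.log n by
        push_cast; ring]
      exact Real.exp_log hn0
    have h2 : (5/δ) < Real.exp ((1/4) * Real.log n) := by
      by_contra hcon
      push_neg at hcon
      have : ((n:ℝ)) ≤ (5/δ)^4 := by
        rw [← hE4]
        exact pow_le_pow_left₀ (Real.exp_pos _).le hcon 4
      linarith
    have h3 : Real.exp (-(1/4) * Real.log n) = (Real.exp ((1/4) * Real.log n))⁻¹ := by
      rw [← Real.exp_neg]; ring_nf
    have h4 : (5:ℝ) < Real.exp ((1/4) * Real.log n) * δ := by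
      have h5 := mul_lt_mul_of_pos_right h2 hδ0
      calc (5:ℝ) = 5/δ * δ := by field_simp
        _ < _ := h5
    rw [hKdef, h3, mul_inv_lt_iff₀ (Real.exp_pos _)]
    linarith
  have hA2s0 : (0:ℝ) ≤ A^2 * s := by positivity
  have hA_half : A ≤ 1/2 := by linarith
  -- pointwise bounds on x
  have hx_nonneg : ∀ k, 0 ≤ x k := by
    intro k; rw [hxdef]; dsimp only
    split_ifs
    · exact (Real.exp_pos _).le
    · exact le_refl 0
  have hx_le : ∀ k, x k ≤ A := by
    intro k; rw [hxdef]; dsimp only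
    split_ifs with h
    · rw [hA_eqT]
      apply Real.exp_le_exp.mpr
      have h1 : T/s ≤ (2*(k:ℝ)+1)/s := (div_le_div_iff_of_pos_right hs0).mpr h.le
      have h2 : (-(2*(k:ℝ)+1))/s = -((2*(k:ℝ)+1)/s) := by ring
      rw [h2]
      linarith
    · exact hA0.le
  have hx_half : ∀ k, x k ≤ 1/2 := fun k => le_trans (hx_le k) hA_half
  have hf_pos : ∀ k, (0:ℝ) < 1 - x k := fun k => by
    have := hx_half k; linarith
  -- the log terms
  set g : ℕ → ℝ := fun k => Real.log (1 - x k) with hgdef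
  have hg_ub : ∀ k, g k ≤ -(x k) := fun k =>
    aux_log_one_sub_le (hx_nonneg k) (hx_half k)
  have hg_lb : ∀ k, -(x k) - 2*(x k)^2 ≤ g k := fun k =>
    aux_le_log_one_sub (hx_nonneg k) (hx_half k)
  have hsum_bound : Summable (fun k => x k + 2*(x k)^2) :=
    hSsum.summable.add (hS2sum.summable.mul_left 2)
  have hgsummable : Summable g := by
    have h1 : Summable (fun k => -(g k)) := by
      apply Summable.of_nonneg_of_le
        (fun k => by have := hg_ub k; have := hx_nonneg k; linarith)
        (fun k => by have := hg_lb k; linarith) hsum_bound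
    have h2 := h1.neg
    simpa using h2
  set L := ∑' k, g k with hLdef
  have hL_ub : L ≤ -S := by
    have h1 := hSsum.neg
    calc L ≤ ∑' k, -(x k) := Summable.tsum_le_tsum hg_ub hgsummable h1.summable
      _ = -S := h1.tsum_eq
  have hL_lb : -S - 2*S₂ ≤ L := by
    have h1 : HasSum (fun k => -(x k) - 2*(x k)^2) (-S - 2*S₂) :=
      (hSsum.neg).sub (hS2sum.mul_left 2)
    calc -S - 2*S₂ = ∑' k, (-(x k) - 2*(x k)^2) := h1.tsum_eq.symm
      _ ≤ L := Summable.tsum_le_tsum hg_lb h1.summable hgsummable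
  -- the product
  have hProd : HasProd (fun k => 1 - x k) (Real.exp L) := by
    have h1 := hgsummable.hasSum.rexp
    have h2 : (Real.exp ∘ g) = fun k => 1 - x k := by
      funext k; exact Real.exp_log (hf_pos k)
    rwa [h2] at h1
  have hgoal_eq : (∏' k : ℕ, if T < 2*(k:ℝ)+1 then
      1 - Real.exp (-(2*(k:ℝ)+1)/s) else 1) = Real.exp L := by
    rw [← hProd.tprod_eq]
    apply tprod_congr
    intro k
    rw [hxdef]; dsimp only
    split_ifs
    · rfl
    · norm_num
  rw [hgoal_eq, ← Real.exp_sub]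
  have hθeq : L - (-(1/2) * Real.exp (-v)) = L + s*A/2 := by
    rw [← hsA]; ring
  rw [hθeq]
  have hθ_ub : L + s*A/2 ≤ 2*A := by linarith
  have hθ_lb : -(2*A + A^2*s) ≤ L + s*A/2 := by linarith
  constructor
  · have h1 := Real.add_one_le_exp (L + s*A/2)
    have h2 : -K ≤ L + s*A/2 := by linarith
    have : 1 - ε < 1 - K := by linarith
    linarith
  · have h3 : L + s*A/2 ≤ K := by linarith
    have h4 : Real.exp (L + s*A/2) ≤ Real.exp K := Real.exp_le_exp.mpr h3
    have h5 : Real.exp K ≤ 1 + 2*K := aux_exp_le hK0.le (by linarith)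
    linarith
end
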